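/- Let q be a prime power and let b, n, k be positive integers with b ≤ n. If C is an F_q-linear code of length n and dimension k whose minimum b-symbol distance is d_b, then (q^b - 1)·n/(q - 1) ≥ Σ_{i=0}^{k-1} ⌈q^{b-1}·d_b / q^i⌉. (Note that q - 1 divides q^b - 1, so the left-hand side is an integer.) -/

import Mathlib

/-- The `b`-symbol weight of a vector `c ∈ F^n` (coordinates indexed cyclically by `ZMod n`):
the number of indices `i` such that the window `(c_i, …, c_{i+b-1})` is nonzero. -/
noncomputable def bWt {n : ℕ} {F : Type*} [Zero F] (b : ℕ) (c : ZMod n → F) : ℕ :=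
  Nat.card {i : ZMod n | ∃ j < b, c (i + (j : ZMod n)) ≠ 0}


open Finset

-- ceilDiv helpers
lemma cd_comp (a b c : ℕ) (hb : 0 < b) (hc : 0 < c) :
    (a ⌈/⌉ b) ⌈/⌉ c = a ⌈/⌉ (b * c) := by
  apply le_antisymm
  · rw [ceilDiv_le_iff_le_mul hc, ceilDiv_le_iff_le_mul hb, ← mul_assoc]
    rw [← ceilDiv_le_iff_le_mul (Nat.mul_pos hb hc)]
  · rw [ceilDiv_le_iff_le_mul (Nat.mul_pos hb hc), mul_assoc,
      ← ceilDiv_le_iff_le_mul hb, ← ceilDiv_le_iff_le_mul hc]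

lemma cd_mono (a a' b : ℕ) (hb : 0 < b) (h : a ≤ a') : a ⌈/⌉ b ≤ a' ⌈/⌉ b := by
  rw [ceilDiv_le_iff_le_mul hb]
  exact h.trans (le_smul_ceilDiv hb)

lemma cd_le_of_mul (a b c : ℕ) (hb : 0 < b) (h : a ≤ b * c) : a ⌈/⌉ b ≤ c :=
  (ceilDiv_le_iff_le_mul hb).2 h

lemma cd_one (a : ℕ) : a ⌈/⌉ (1:ℕ) = a := ceilDiv_one a

lemma ceil_eq_cd (a b : ℕ) (hb : 0 < b) :
    ⌈(a : ℚ) / (b : ℚ)⌉ = ((a ⌈/⌉ b : ℕ) : ℤ) := by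
  have hbq : (0:ℚ) < b := by exact_mod_cast hb
  apply le_antisymm
  · rw [Int.ceil_le]
    rw [div_le_iff₀ hbq]
    have := le_smul_ceilDiv (b := a) hb
    rw [smul_eq_mul] at this
    push_cast
    rw [mul_comm]
    exact_mod_cast this
  · have h0 : (0:ℤ) ≤ ⌈(a : ℚ) / (b : ℚ)⌉ := by
      positivity
    obtain ⟨m, hm⟩ := Int.eq_ofNat_of_zero_le h0
    rw [hm]
    have hle : (a : ℚ) / b ≤ m := by
      have := Int.le_ceil ((a : ℚ) / (b : ℚ))
      rw [hm] at this; exact_mod_cast this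
    rw [div_le_iff₀ hbq] at hle
    have : a ≤ b * m := by exact_mod_cast (by linarith : (a:ℚ) ≤ b * m)
    exact_mod_cast cd_le_of_mul a b m hb this


lemma inner_count {F : Type*} [Field F] [Fintype F] [DecidableEq F] (u v : F) :
    (univ.filter (fun a : F => u - a * v ≠ 0)).card
      = if v = 0 then (if u ≠ 0 then Fintype.card F else 0) else Fintype.card F - 1 := by
  by_cases hv : v = 0
  · subst hv
    by_cases hu : u ≠ 0 <;> simp [hu, filter_true_of_mem, Finset.card_univ]
  · simp only [hv, if_false]
    have hcomp : (univ.filter (fun a : F => ¬ (u - a * v ≠ 0))) = {u * v⁻¹} := by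
      ext a
      simp only [mem_filter, mem_univ, true_and, not_not, mem_singleton, sub_eq_zero]
      constructor
      · rintro h; rw [h, mul_inv_cancel_right₀ hv]
      · rintro rfl; field_simp
    have := Finset.card_filter_add_card_filter_not
      (s := (univ : Finset F)) (p := fun a : F => u - a * v ≠ 0)
    rw [hcomp] at this
    simp only [Finset.card_singleton, Finset.card_univ] at this
    omega

lemma key_sum {F : Type*} [Field F] [Fintype F] [DecidableEq F] {ι : Type*} [Fintype ι]
    (x c : ι → F) :
    ∑ a : F, hammingNorm (x - a • c) =
      (Fintype.card F - 1) * hammingNorm c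
        + Fintype.card F * (univ.filter (fun i => c i = 0 ∧ x i ≠ 0)).card := by
  have h1 : ∀ y : ι → F, hammingNorm y = ∑ i : ι, if y i ≠ 0 then 1 else 0 := by
    intro y; rw [hammingNorm, Finset.card_filter]
  calc ∑ a : F, hammingNorm (x - a • c)
      = ∑ a : F, ∑ i : ι, if x i - a * c i ≠ 0 then 1 else 0 := by
        refine Finset.sum_congr rfl fun a _ => ?_
        rw [h1]; rfl
    _ = ∑ i : ι, ∑ a : F, if x i - a * c i ≠ 0 then 1 else 0 := Finset.sum_comm
    _ = ∑ i : ι, (if c i = 0 then (if x i ≠ 0 then Fintype.card F else 0)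
          else Fintype.card F - 1) := by
        refine Finset.sum_congr rfl fun i _ => ?_
        rw [← Finset.card_filter]
        exact inner_count (x i) (c i)
    _ = _ := by
        rw [Finset.sum_ite, Finset.sum_ite, Finset.sum_const_zero, add_zero,
          Finset.sum_const, Finset.sum_const, Finset.filter_filter, smul_eq_mul, smul_eq_mul]
        rw [add_comm]
        simp only [hammingNorm, mul_comm]

theorem griesmer_aux (F : Type*) [Field F] [Fintype F] [DecidableEq F] (k : ℕ) :
    ∀ (ι : Type w) [Fintype ι] [DecidableEq ι] (C : Submodule F (ι → F)),
      Module.finrank F C = k →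
      ∀ d : ℕ, (∀ x ∈ C, x ≠ 0 → d ≤ hammingNorm x) →
      ∑ i ∈ Finset.range k, (d ⌈/⌉ (Fintype.card F) ^ i) ≤ Fintype.card ι := by
  induction k with
  | zero => intros; simp
  | succ k ih =>
    intro ι _ _ C hdim d hlb
    classical
    set q := Fintype.card F with hq
    have hq2 : 2 ≤ q := Fintype.one_lt_card
    -- find a minimum-weight nonzero codeword
    have hnt : Nontrivial C := by
      rw [← Module.finrank_pos_iff (R := F)]
      omega
    obtain ⟨x0, hx0⟩ := exists_ne (0 : C)
    have hS : ((univ : Finset (ι → F)).filter (fun x => x ∈ C ∧ x ≠ 0)).Nonempty := by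
      refine ⟨(x0 : ι → F), ?_⟩
      simp only [mem_filter, mem_univ, true_and]
      exact ⟨x0.2, by simpa [Submodule.coe_eq_zero] using hx0⟩
    obtain ⟨c, hcmem, hmin'⟩ := Finset.exists_min_image _ hammingNorm hS
    simp only [mem_filter, mem_univ, true_and] at hcmem
    obtain ⟨hcC, hc0⟩ := hcmem
    have hmin : ∀ x ∈ C, x ≠ 0 → hammingNorm c ≤ hammingNorm x := by
      intro x hx hx0
      exact hmin' x (by simp [mem_filter, hx, hx0])
    set w := hammingNorm c with hw
    have hdw : d ≤ w := hlb c hcC hc0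
    have hwpos : 0 < w := by
      rw [hw, hammingNorm]
      rw [Finset.card_pos]
      obtain ⟨i, hi⟩ := Function.ne_iff.1 hc0
      exact ⟨i, by simpa using hi⟩
    have hwcard : w ≤ Fintype.card ι := by
      rw [hw, hammingNorm, ← Finset.card_univ]
      exact Finset.card_filter_le _ _
    -- residual code
    let π : (ι → F) →ₗ[F] ({i : ι // c i = 0} → F) :=
      LinearMap.funLeft F F (Subtype.val)
    set C' := C.map π with hC'
    have hπapp : ∀ (x : ι → F) (i' : {i : ι // c i = 0}), π x i' = x i'.1 := fun _ _ => rfl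
    -- kernel of the restriction is the span of c
    set f := π.comp C.subtype with hf
    have hcK : f ⟨c, hcC⟩ = 0 := by
      funext i'
      exact i'.2
    have hker : LinearMap.ker f = Submodule.span F {(⟨c, hcC⟩ : C)} := by
      apply le_antisymm
      · rintro ⟨x, hx⟩ hxk
        have hxvan : ∀ i : ι, c i = 0 → x i = 0 := by
          intro i hi
          have : f ⟨x, hx⟩ = 0 := hxk
          exact congrFun this ⟨i, hi⟩
        by_cases hx0 : x = 0
        · have : (⟨x, hx⟩ : C) = 0 := by exact Subtype.ext hx0
          rw [this]; exact Submodule.zero_mem _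
        · obtain ⟨i0, hi0⟩ := Function.ne_iff.1 hc0
          simp only [Pi.zero_apply] at hi0
          set a := x i0 * (c i0)⁻¹ with ha
          set z := x - a • c with hz
          have hzC : z ∈ C := Submodule.sub_mem _ hx (Submodule.smul_mem _ _ hcC)
          have hzi0 : z i0 = 0 := by
            simp only [hz, Pi.sub_apply, Pi.smul_apply, smul_eq_mul, ha]
            field_simp
            ring
          have hzsub : (univ.filter (fun i => z i ≠ 0)) ⊆ (univ.filter (fun i => c i ≠ 0)).erase i0 := by
            intro i hi
            simp only [mem_filter, mem_univ, true_and] at hi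
            rw [Finset.mem_erase]
            constructor
            · rintro rfl; exact hi hzi0
            · simp only [mem_filter, mem_univ, true_and]
              intro hci
              exact hi (by simp [hz, hxvan i hci, hci])
          have hzlt : hammingNorm z < w := by
            calc hammingNorm z ≤ _ := Finset.card_le_card hzsub
            _ < w := by
                rw [Finset.card_erase_of_mem (by simp [hi0])]
                have h1 : (0:ℕ) < #(filter (fun i => c i ≠ 0) univ) := by
                  rw [Finset.card_pos]; exact ⟨i0, by simp [hi0]⟩
                have h2 : w = #(filter (fun i => c i ≠ 0) univ) := by
                  rw [hw, hammingNorm]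
                omega
          have hz0 : z = 0 := by
            by_contra hzne
            exact absurd (hmin z hzC hzne) (by omega)
          have hxa : x = a • c := by
            rwa [hz, sub_eq_zero] at hz0
          rw [Submodule.mem_span_singleton]
          exact ⟨a, Subtype.ext (by simp [hxa])⟩
      · rw [Submodule.span_le, Set.singleton_subset_iff]
        exact hcK
    have hkerrank : Module.finrank F (LinearMap.ker f) = 1 := by
      rw [hker]
      exact finrank_span_singleton (by
        intro h
        exact hc0 (by simpa [Submodule.mk_eq_zero] using h))
    have hrange : LinearMap.range f = C' := by
      rw [hf, LinearMap.range_comp, Submodule.range_subtype, hC']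
    have hrk' : Module.finrank F C' = k := by
      have := LinearMap.finrank_range_add_finrank_ker f
      rw [hrange, hkerrank, hdim] at this
      omega
    -- residual minimum distance
    have hres : ∀ y ∈ C', y ≠ 0 → w ⌈/⌉ q ≤ hammingNorm y := by
      rintro y hy hy0
      obtain ⟨x, hxC, rfl⟩ := Submodule.mem_map.1 hy
      obtain ⟨i0', hi0'⟩ := Function.ne_iff.1 hy0
      have hxi0 : x i0'.1 ≠ 0 := by simpa [hπapp] using hi0'
      have hMeq : hammingNorm (π x) = #(filter (fun i => c i = 0 ∧ x i ≠ 0) univ) := by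
        rw [hammingNorm]
        rw [← Fintype.card_subtype, ← Fintype.card_subtype]
        exact Fintype.card_congr
          ((Equiv.subtypeSubtypeEquivSubtypeInter (fun i : ι => c i = 0) (fun i => x i ≠ 0)))
      set M := #(filter (fun i => c i = 0 ∧ x i ≠ 0) univ) with hM
      have hkey := key_sum x c
      have hterm : ∀ a : F, w ≤ hammingNorm (x - a • c) := by
        intro a
        apply hmin _ (Submodule.sub_mem _ hxC (Submodule.smul_mem _ _ hcC))
        intro h
        have := congrFun h i0'.1
        simp only [Pi.sub_apply, Pi.smul_apply, smul_eq_mul, Pi.zero_apply, i0'.2, mul_zero,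
          sub_zero] at this
        exact hxi0 this
      have hsum : q * w ≤ (q - 1) * w + q * M := by
        calc q * w = ∑ _a : F, w := by rw [Finset.sum_const, Finset.card_univ, smul_eq_mul, hq]
        _ ≤ ∑ a : F, hammingNorm (x - a • c) := Finset.sum_le_sum (fun a _ => hterm a)
        _ = (q - 1) * w + q * M := hkey
      have hwqM : w ≤ q * M := by
        have h1 : q * w = (q - 1) * w + w := by
          have : q - 1 + 1 = q := by omega
          calc q * w = (q - 1 + 1) * w := by rw [this]
          _ = (q-1) * w + w := by ring
        omega
      rw [hMeq]
      exact cd_le_of_mul w q M (by omega) hwqM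
    -- apply IH
    have hIH := ih {i : ι // c i = 0} C' hrk' (w ⌈/⌉ q) hres
    have hcard' : Fintype.card {i : ι // c i = 0} = Fintype.card ι - w := by
      rw [Fintype.card_subtype]
      have := Finset.card_filter_add_card_filter_not
        (s := (univ : Finset ι)) (p := fun i => c i = 0)
      rw [Finset.card_univ] at this
      have hwe : #(filter (fun i => ¬ c i = 0) univ) = w := by
        rw [hw, hammingNorm]
      omega
    rw [hcard'] at hIH
    -- assemble
    have hstep : ∀ i : ℕ, d ⌈/⌉ q ^ (i+1) ≤ (w ⌈/⌉ q) ⌈/⌉ q ^ i := by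
      intro i
      rw [cd_comp w q (q^i) (by omega) (by positivity), ← pow_succ']
      exact cd_mono d w (q^(i+1)) (by positivity) hdw
    calc ∑ i ∈ Finset.range (k+1), d ⌈/⌉ q ^ i
        = (∑ i ∈ Finset.range k, d ⌈/⌉ q ^ (i+1)) + d ⌈/⌉ q ^ 0 := Finset.sum_range_succ' _ _
      _ ≤ (∑ i ∈ Finset.range k, (w ⌈/⌉ q) ⌈/⌉ q ^ i) + d := by
          refine Nat.add_le_add (Finset.sum_le_sum fun i _ => hstep i) ?_
          rw [pow_zero, ceilDiv_one]
      _ ≤ (Fintype.card ι - w) + w := Nat.add_le_add hIH hdw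
      _ ≤ Fintype.card ι := by omega


section Nml
variable {F : Type*} [Field F] {b : ℕ}

noncomputable def nml (u : Fin b → F) : Fin b → F :=
  letI := Classical.decEq F
  if h : u = 0 then 0 else
    (u ((Finset.univ.filter (fun j => u j ≠ 0)).min' (by
      obtain ⟨j, hj⟩ := Function.ne_iff.1 h
      exact ⟨j, by simp only [Finset.mem_filter, Finset.mem_univ, true_and]; simpa using hj⟩)))⁻¹ • u

lemma nml_smul (a : F) (ha : a ≠ 0) (u : Fin b → F) : nml (a • u) = nml u := by
  classical
  by_cases h : u = 0
  · rw [h, smul_zero]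
  · have hau : a • u ≠ 0 := smul_ne_zero ha h
    rw [nml, nml]
    rw [dif_neg hau, dif_neg h]
    have hset : (Finset.univ.filter (fun j => (a • u) j ≠ 0)) =
        (Finset.univ.filter (fun j => u j ≠ 0)) := by
      ext j
      simp [Pi.smul_apply, smul_eq_mul, mul_ne_zero_iff, ha]
    have hmin : ∀ (h1 : (Finset.univ.filter (fun j => (a • u) j ≠ 0)).Nonempty)
        (h2 : (Finset.univ.filter (fun j => u j ≠ 0)).Nonempty),
        (Finset.univ.filter (fun j => (a • u) j ≠ 0)).min' h1 =
        (Finset.univ.filter (fun j => u j ≠ 0)).min' h2 := by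
      intro h1 h2
      congr 1
    rw [hmin _ _]
    · set j0 := (Finset.univ.filter (fun j => u j ≠ 0)).min' (by
        obtain ⟨j, hj⟩ := Function.ne_iff.1 h
        exact ⟨j, by simp only [Finset.mem_filter, Finset.mem_univ, true_and]; simpa using hj⟩) with hj0
      have hj0mem : u j0 ≠ 0 := by
        have := Finset.min'_mem (Finset.univ.filter (fun j => u j ≠ 0)) (by
          obtain ⟨j, hj⟩ := Function.ne_iff.1 h
          exact ⟨j, by simp only [Finset.mem_filter, Finset.mem_univ, true_and]; simpa using hj⟩)
        simp only [mem_filter] at this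
        exact this.2
      funext i
      simp only [Pi.smul_apply, smul_eq_mul]
      field_simp
    · obtain ⟨j, hj⟩ := Function.ne_iff.1 h
      exact ⟨j, by simp only [Finset.mem_filter, Finset.mem_univ, true_and]; simpa using hj⟩

lemma nml_spec (u : Fin b → F) (h : u ≠ 0) : ∃ a : F, a ≠ 0 ∧ u = a • nml u := by
  classical
  rw [nml, dif_neg h]
  set j0 := (Finset.univ.filter (fun j => u j ≠ 0)).min' (by
    obtain ⟨j, hj⟩ := Function.ne_iff.1 h
    exact ⟨j, by simp only [Finset.mem_filter, Finset.mem_univ, true_and]; simpa using hj⟩) with hj0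
  have hj0mem : u j0 ≠ 0 := by
    have := Finset.min'_mem (Finset.univ.filter (fun j => u j ≠ 0)) (by
      obtain ⟨j, hj⟩ := Function.ne_iff.1 h
      exact ⟨j, by simp only [Finset.mem_filter, Finset.mem_univ, true_and]; simpa using hj⟩)
    simp only [mem_filter] at this
    exact this.2
  refine ⟨u j0, hj0mem, ?_⟩
  rw [smul_smul]
  rw [mul_inv_cancel₀ hj0mem, one_smul]

lemma nml_ne (u : Fin b → F) (h : u ≠ 0) : nml u ≠ 0 := by
  obtain ⟨a, ha, hu⟩ := nml_spec u h
  intro h0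
  rw [h0, smul_zero] at hu
  exact h hu

lemma nml_idem (u : Fin b → F) (h : u ≠ 0) : nml (nml u) = nml u := by
  obtain ⟨a, ha, hu⟩ := nml_spec u h
  conv_rhs => rw [hu]
  rw [nml_smul a ha]

end Nml



open Finset

section PDef
variable (F : Type*) [Field F] [Fintype F] (b : ℕ)

noncomputable def Pset : Finset (Fin b → F) :=
  letI := Classical.decEq F
  letI : DecidableEq (Fin b → F) := Classical.decEq _
  (Finset.univ.filter (fun u : Fin b → F => u ≠ 0)).image nml

variable {F b}

lemma mem_Pset {p : Fin b → F} (hp : p ∈ Pset F b) : p ≠ 0 ∧ nml p = p := by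
  classical
  rw [Pset] at hp
  simp only [Finset.mem_image, Finset.mem_filter, Finset.mem_univ, true_and] at hp
  obtain ⟨u, hu, rfl⟩ := hp
  exact ⟨nml_ne u hu, nml_idem u hu⟩

lemma nml_mem_Pset {u : Fin b → F} (hu : u ≠ 0) : nml u ∈ Pset F b := by
  classical
  rw [Pset]
  simp only [Finset.mem_image, Finset.mem_filter, Finset.mem_univ, true_and]
  exact ⟨u, hu, rfl⟩

/-- Fiberwise counting: a scalar-invariant predicate on nonzero vectors is `(q-1)` times
    as frequent among all nonzero vectors as among normalized representatives. -/
lemma fiber_count (Q : (Fin b → F) → Prop) [DecidablePred Q]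
    [DecidableEq (Fin b → F)] [DecidableEq F]
    (hQ : ∀ (a : F), a ≠ 0 → ∀ u, Q (a • u) ↔ Q u) :
    ((Finset.univ.filter (fun u : Fin b → F => u ≠ 0 ∧ Q u)).card)
      = (Fintype.card F - 1) * ((Pset F b).filter Q).card := by
  classical
  rw [Finset.card_eq_sum_card_fiberwise (f := nml) (t := ((Pset F b).filter Q))
    (fun u hu => by
      simp only [Finset.mem_coe, Finset.mem_filter, Finset.mem_univ, true_and] at hu
      obtain ⟨hu0, hQu⟩ := hu
      refine Finset.mem_filter.2 ⟨nml_mem_Pset hu0, ?_⟩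
      obtain ⟨a, ha, hspec⟩ := nml_spec u hu0
      rw [hspec] at hQu
      exact (hQ a ha _).1 hQu)]
  have hfibcard : ∀ t ∈ (Pset F b).filter Q,
      ((Finset.univ.filter (fun u : Fin b → F => u ≠ 0 ∧ Q u)).filter
        (fun u => nml u = t)).card = Fintype.card F - 1 := by
    intro t ht
    have htP := Finset.mem_filter.1 ht
    obtain ⟨ht0, htn⟩ := mem_Pset htP.1
    have hfib : ((Finset.univ.filter (fun u : Fin b → F => u ≠ 0 ∧ Q u)).filter
        (fun u => nml u = t)) = (Finset.univ.filter (fun a : F => a ≠ 0)).image (· • t) := by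
      ext u
      simp only [Finset.mem_filter, Finset.mem_univ, true_and, Finset.mem_image]
      constructor
      · rintro ⟨⟨hu0, hQu⟩, hnu⟩
        obtain ⟨a, ha, hspec⟩ := nml_spec u hu0
        exact ⟨a, ha, by rw [hspec, hnu]⟩
      · rintro ⟨a, ha, rfl⟩
        refine ⟨⟨smul_ne_zero ha ht0, (hQ a ha t).2 htP.2⟩, by rw [nml_smul a ha, htn]⟩
    rw [hfib, Finset.card_image_of_injOn, Finset.filter_ne', Finset.card_erase_of_mem
      (Finset.mem_univ _), Finset.card_univ]
    intro a _ a' _ hgl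
    obtain ⟨j, hj⟩ := Function.ne_iff.1 ht0
    have := congrFun hgl j
    simp only [Pi.smul_apply, smul_eq_mul] at this
    have hj' : t j ≠ 0 := by simpa using hj
    exact mul_right_cancel₀ hj' this
  rw [Finset.sum_congr rfl hfibcard, Finset.sum_const, smul_eq_mul, mul_comm]

end PDef

section Counting
open Finset
variable {F : Type*} [Field F] [Fintype F] {b : ℕ}

/-- number of vectors not killed by a nonzero functional -/
lemma dot_count [DecidableEq F] (v : Fin b → F) (hv : v ≠ 0) :
    ((Finset.univ.filter (fun u : Fin b → F => ∑ j, v j * u j ≠ 0)).card)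
      = Fintype.card F ^ b - Fintype.card F ^ (b-1) := by
  classical
  set φ : (Fin b → F) →ₗ[F] F :=
    { toFun := fun u => ∑ j, v j * u j
      map_add' := by
        intro x y
        simp [mul_add, Finset.sum_add_distrib]
      map_smul' := by
        intro a x
        simp [Finset.mul_sum, mul_left_comm] } with hφ
  obtain ⟨j0, hj0⟩ := Function.ne_iff.1 hv
  have hj0' : v j0 ≠ 0 := by simpa using hj0
  have hsurj : Function.Surjective φ := by
    intro y
    refine ⟨Pi.single j0 ((v j0)⁻¹ * y), ?_⟩
    have hphi : φ (Pi.single j0 ((v j0)⁻¹ * y))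
        = ∑ j, v j * (Pi.single j0 ((v j0)⁻¹ * y) : Fin b → F) j := rfl
    rw [hphi, Finset.sum_eq_single j0]
    · rw [Pi.single_eq_same]
      field_simp
    · intro j _ hj
      rw [Pi.single_eq_of_ne hj, mul_zero]
    · intro h
      exact absurd (Finset.mem_univ j0) h
  have hrange : LinearMap.range φ = ⊤ := LinearMap.range_eq_top.2 hsurj
  have hrk : Module.finrank F (LinearMap.ker φ) = b - 1 := by
    have h1 := LinearMap.finrank_range_add_finrank_ker φ
    rw [hrange] at h1
    rw [finrank_top, Module.finrank_self] at h1
    have h2 : Module.finrank F (Fin b → F) = b := by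
      rw [Module.finrank_fintype_fun_eq_card, Fintype.card_fin]
    rw [h2] at h1
    omega
  haveI : Fintype (LinearMap.ker φ) := Fintype.ofFinite _
  have hcard : Fintype.card (LinearMap.ker φ) = Fintype.card F ^ (b-1) := by
    rw [Module.card_eq_pow_finrank (K := F), hrk]
  have hker : ((Finset.univ.filter (fun u : Fin b → F => ∑ j, v j * u j = 0)).card)
      = Fintype.card F ^ (b-1) := by
    rw [← Fintype.card_subtype]
    rw [← hcard]
    apply Fintype.card_congr
    exact (Equiv.subtypeEquivRight (fun u => (LinearMap.mem_ker (f := φ)).symm)).symm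
  have htot := Finset.card_filter_add_card_filter_not
    (s := (Finset.univ : Finset (Fin b → F))) (p := fun u => ∑ j, v j * u j = 0)
  rw [Finset.card_univ, Fintype.card_fun, Fintype.card_fin] at htot
  rw [hker] at htot
  have hle : Fintype.card F ^ (b-1) ≤ Fintype.card F ^ b :=
    Nat.pow_le_pow_right Fintype.card_pos (Nat.sub_le b 1)
  have heq : ((Finset.univ.filter (fun u : Fin b → F => ∑ j, v j * u j ≠ 0)).card)
      = ((Finset.univ.filter (fun u : Fin b → F => ¬ ∑ j, v j * u j = 0)).card) := rfl
  rw [heq]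
  exact Nat.eq_sub_of_add_eq' htot

lemma Pset_dot_count [DecidableEq F] (hb : 0 < b) (v : Fin b → F) (hv : v ≠ 0) :
    (((Pset F b).filter (fun p => ∑ j, v j * p j ≠ 0)).card) = Fintype.card F ^ (b-1) := by
  classical
  have hq2 : 2 ≤ Fintype.card F := Fintype.one_lt_card
  have hQ : ∀ (a : F), a ≠ 0 → ∀ u : Fin b → F,
      ((∑ j, v j * (a • u) j ≠ 0) ↔ (∑ j, v j * u j ≠ 0)) := by
    intro a ha u
    have : ∑ j, v j * (a • u) j = a * ∑ j, v j * u j := by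
      rw [Finset.mul_sum]
      refine Finset.sum_congr rfl fun j _ => ?_
      simp [Pi.smul_apply, smul_eq_mul]; ring
    rw [this, mul_ne_zero_iff]
    simp [ha]
  have hfc := fiber_count (fun u : Fin b → F => ∑ j, v j * u j ≠ 0) hQ
  have hzero : ∀ u : Fin b → F, (∑ j, v j * u j ≠ 0) → u ≠ 0 := by
    rintro u h rfl
    simp at h
  have hflt : (Finset.univ.filter (fun u : Fin b → F => u ≠ 0 ∧ ∑ j, v j * u j ≠ 0))
      = (Finset.univ.filter (fun u : Fin b → F => ∑ j, v j * u j ≠ 0)) := by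
    ext u
    simp only [Finset.mem_filter, Finset.mem_univ, true_and, and_iff_right_iff_imp]
    exact hzero u
  rw [hflt, dot_count v hv] at hfc
  have hfact : Fintype.card F ^ b - Fintype.card F ^ (b-1)
      = (Fintype.card F - 1) * Fintype.card F ^ (b-1) := by
    have hb' : b - 1 + 1 = b := Nat.succ_pred_eq_of_pos hb
    calc Fintype.card F ^ b - Fintype.card F ^ (b-1)
        = Fintype.card F ^ (b-1) * Fintype.card F - Fintype.card F ^ (b-1) * 1 := by
          rw [← pow_succ, hb', mul_one]
      _ = Fintype.card F ^ (b-1) * (Fintype.card F - 1) := by rw [Nat.mul_sub_left_distrib]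
      _ = (Fintype.card F - 1) * Fintype.card F ^ (b-1) := mul_comm _ _
  rw [hfact] at hfc
  exact (Nat.eq_of_mul_eq_mul_left (Nat.sub_pos_of_lt hq2) hfc.symm)

lemma Pset_card [DecidableEq F] (hb : 0 < b) :
    (Fintype.card F - 1) * (Pset F b).card = Fintype.card F ^ b - 1 := by
  classical
  have hfc := fiber_count (F := F) (b := b) (fun _ => True) (by intro a ha u; simp)
  rw [Finset.filter_true] at hfc
  have hflt : (Finset.univ.filter (fun u : Fin b → F => u ≠ 0 ∧ True))
      = (Finset.univ : Finset (Fin b → F)).erase 0 := by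
    rw [← Finset.filter_ne']
    ext u; simp
  rw [hflt, Finset.card_erase_of_mem (Finset.mem_univ _), Finset.card_univ,
    Fintype.card_fun, Fintype.card_fin] at hfc
  exact hfc.symm

end Counting

section Main
open Finset

noncomputable def PhiMap (F : Type*) [Field F] [Fintype F] (b n : ℕ) :
    (ZMod n → F) →ₗ[F] ((ZMod n × {p // p ∈ Pset F b}) → F) where
  toFun c := fun ip => ∑ j : Fin b, (ip.2 : Fin b → F) j * c (ip.1 + ((j : ℕ) : ZMod n))
  map_add' x y := by
    funext ip
    simp only [Pi.add_apply]
    rw [← Finset.sum_add_distrib]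
    exact Finset.sum_congr rfl fun j _ => by ring
  map_smul' a x := by
    funext ip
    simp only [Pi.smul_apply, smul_eq_mul, RingHom.id_apply]
    rw [Finset.mul_sum]
    exact Finset.sum_congr rfl fun j _ => by ring


/-- The Griesmer bound in the `b`-symbol metric: if `C` is an `(n, k, d_b)^b_q` linear code,
then `(q^b - 1)·n/(q - 1) ≥ Σ_{i=0}^{k-1} ⌈q^{b-1}·d_b / q^i⌉`. -/
theorem stmt0 (q b n k d : ℕ) (hb : 0 < b) (hbn : b ≤ n) (hk : 0 < k)
    (F : Type*) [Field F] [Fintype F] (hF : Fintype.card F = q)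
    (C : Submodule F (ZMod n → F)) (hdim : Module.finrank F C = k)
    (hlb : ∀ c ∈ C, c ≠ 0 → d ≤ bWt b c)
    (hex : ∃ c ∈ C, c ≠ 0 ∧ bWt b c = d) :
    (∑ i ∈ Finset.range k, (⌈((q ^ (b - 1) * d : ℕ) : ℚ) / (q : ℚ) ^ i⌉ : ℚ))
      ≤ ((q ^ b - 1 : ℕ) : ℚ) * n / ((q : ℚ) - 1) := by
  classical
  have hq2 : 2 ≤ q := hF ▸ Fintype.one_lt_card
  haveI : NeZero n := ⟨by omega⟩
  set P := Pset F b with hP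
  set Φ := PhiMap F b n with hΦ
  -- windows
  set wdw : (ZMod n → F) → ZMod n → (Fin b → F) :=
    (fun c i => fun j : Fin b => c (i + ((j : ℕ) : ZMod n))) with hwdw
  have hΦapp : ∀ (c : ZMod n → F) (ip : ZMod n × {p // p ∈ P}),
      Φ c ip = ∑ j : Fin b, (ip.2 : Fin b → F) j * wdw c ip.1 j := by
    intro c ip
    simp only [hΦ, hwdw]
    rfl
  -- bWt as a filter card
  have hbWt : ∀ c : ZMod n → F,
      bWt b c = (Finset.univ.filter (fun i : ZMod n => wdw c i ≠ 0)).card := by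
    intro c
    rw [bWt, Nat.card_coe_set_eq, Set.ncard_eq_toFinset_card', Set.toFinset_setOf]
    congr 1
    ext i
    simp only [Finset.mem_filter, Finset.mem_univ, true_and]
    constructor
    · rintro ⟨j, hj, hne⟩ h0
      exact hne (by simpa using congrFun h0 ⟨j, hj⟩)
    · intro h
      obtain ⟨j, hj⟩ := Function.ne_iff.1 h
      exact ⟨j.1, j.2, by simpa using hj⟩
  -- weight formula
  have hwt : ∀ c : ZMod n → F,
      hammingNorm (Φ c) = q ^ (b-1) * bWt b c := by
    intro c
    rw [hammingNorm, Finset.card_filter, Fintype.sum_prod_type]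
    have hinner : ∀ i : ZMod n,
        (∑ p : {p // p ∈ P}, if Φ c (i, p) ≠ 0 then 1 else 0)
          = if wdw c i ≠ 0 then q ^ (b-1) else 0 := by
      intro i
      have h1 : (∑ p : {p // p ∈ P}, if Φ c (i, p) ≠ 0 then 1 else 0)
          = (P.filter (fun p => ∑ j, wdw c i j * p j ≠ 0)).card := by
        rw [Finset.card_filter,
          ← Finset.sum_attach (P) (fun p => if (∑ j, wdw c i j * p j ≠ 0 : Prop) then 1 else 0),
          Finset.univ_eq_attach]
        refine Finset.sum_congr rfl fun p _ => ?_
        have hsum : Φ c (i, p) = ∑ j, wdw c i j * (p : Fin b → F) j := by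
          rw [hΦapp]
          exact Finset.sum_congr rfl fun j _ => mul_comm _ _
        rw [hsum]
      by_cases h0 : wdw c i = 0
      · rw [if_neg (by simp [h0]), h1, Finset.card_eq_zero, Finset.filter_eq_empty_iff]
        intro p _
        simp [h0]
      · rw [if_pos h0, h1]
        rw [← hF]
        exact Pset_dot_count hb (wdw c i) h0
    rw [Finset.sum_congr rfl (fun i _ => hinner i)]
    rw [Finset.sum_ite, Finset.sum_const, Finset.sum_const_zero, add_zero, smul_eq_mul,
      hbWt c, mul_comm]
  -- injectivity
  have hinj : Function.Injective Φ := by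
    rw [← LinearMap.ker_eq_bot]
    rw [LinearMap.ker_eq_bot']
    intro c hc
    have hwin : ∀ i : ZMod n, wdw c i = 0 := by
      intro i
      by_contra h0
      have hcnt := Pset_dot_count (F := F) hb (wdw c i) h0
      rw [hF] at hcnt
      have hpos : 0 < ((Pset F b).filter (fun p => ∑ j, wdw c i j * p j ≠ 0)).card := by
        rw [hcnt]; positivity
      obtain ⟨p, hp⟩ := Finset.card_pos.1 hpos
      rw [Finset.mem_filter] at hp
      apply hp.2
      have := congrFun hc (i, ⟨p, hp.1⟩)
      rw [hΦapp] at this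
      simp only [Pi.zero_apply] at this
      rw [← this]
      exact Finset.sum_congr rfl fun j _ => by ring
    funext i
    have := congrFun (hwin i) ⟨0, hb⟩
    simpa [hwdw] using this
  -- apply Griesmer
  have hrk : Module.finrank F (C.map Φ) = k := by
    rw [← hdim]
    exact (LinearEquiv.finrank_eq (Submodule.equivMapOfInjective Φ hinj C)).symm
  have hlb' : ∀ y ∈ C.map Φ, y ≠ 0 → q ^ (b-1) * d ≤ hammingNorm y := by
    rintro y hy hy0
    obtain ⟨c, hcC, rfl⟩ := Submodule.mem_map.1 hy
    have hc0 : c ≠ 0 := by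
      rintro rfl
      exact hy0 (map_zero Φ)
    rw [hwt c]
    exact Nat.mul_le_mul_left _ (hlb c hcC hc0)
  have hgries := griesmer_aux F k (ZMod n × {p // p ∈ P}) (C.map Φ) hrk
    (q ^ (b-1) * d) hlb'
  rw [hF] at hgries
  have hcard : Fintype.card (ZMod n × {p // p ∈ P}) = n * P.card := by
    rw [Fintype.card_prod, ZMod.card, Fintype.card_coe]
  rw [hcard] at hgries
  -- rational massage
  have hPcard : (q - 1) * P.card = q ^ b - 1 := by
    rw [hP, ← hF]
    exact Pset_card hb
  have hterm : ∀ i : ℕ, (⌈((q ^ (b - 1) * d : ℕ) : ℚ) / (q : ℚ) ^ i⌉ : ℚ)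
      = (((q ^ (b-1) * d) ⌈/⌉ q ^ i : ℕ) : ℚ) := by
    intro i
    have hpos : 0 < q ^ i := by positivity
    have := ceil_eq_cd (q ^ (b-1) * d) (q ^ i) hpos
    have h2 : ((q : ℚ)) ^ i = ((q ^ i : ℕ) : ℚ) := by push_cast; ring
    rw [h2, this]
    push_cast
    ring
  rw [Finset.sum_congr rfl (fun i _ => hterm i)]
  rw [← Nat.cast_sum]
  have hsum : ((∑ i ∈ Finset.range k, (q ^ (b-1) * d) ⌈/⌉ q ^ i : ℕ) : ℚ)
      ≤ ((n * P.card : ℕ) : ℚ) := by exact_mod_cast hgries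
  refine hsum.trans ?_
  have hq1 : ((q : ℚ) - 1) ≠ 0 := by
    have : (2 : ℚ) ≤ (q : ℚ) := by exact_mod_cast hq2
    linarith
  have hcast : ((q ^ b - 1 : ℕ) : ℚ) = ((q : ℚ) - 1) * P.card := by
    rw [← hPcard]
    push_cast [Nat.cast_sub (by omega : 1 ≤ q)]
    ring
  rw [hcast]
  have heqd : ((q:ℚ) - 1) * (P.card : ℚ) * n / ((q:ℚ) - 1) = (P.card : ℚ) * n := by
    field_simp
  rw [heqd]
  push_cast
  exact le_of_eq (by ring)
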